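/- arXiv:1512.05230 — 2 statements merged into one kernel-verified Lean document; each statement's English description precedes it below -/
import Mathlib

section
/- Let n ≥ 3. At every point of the open set Ω_n, the Fréchet derivative of the map g̃_n : ℝ^(6n−9) → ℝ^(4n−6) is surjective (has full rank 3(n−2) + n); in particular 0 is a regular value of the restriction of g̃_n to Ω_n, so that the solution set T̃_n = {x ∈ Ω_n : g̃_n(x) = 0} is locally the zero set of a submersion and has dimension 2n − 3. -/
open Real

/-- The spherical law of cosines map `g_3`, as a vector in `ℝ³`. -/
noncomputable def gThree (a b c α β γ : ℝ) : Fin 3 → ℝ :=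
  ![Real.cos b * Real.cos c + Real.sin b * Real.sin c * Real.cos α - Real.cos a,
    Real.cos c * Real.cos a + Real.sin c * Real.sin a * Real.cos β - Real.cos b,
    Real.cos a * Real.cos b + Real.sin a * Real.sin b * Real.cos γ - Real.cos c]

/-- The domain `ℝ^(6n−9)` of `g̃_n`, as the product of the spaces of the variables
`σ ∈ ℝⁿ`, `δ ∈ ℝⁿ`, `α, β, γ ∈ ℝ^(n−2)` and `c ∈ ℝ^(n−3)`. -/
abbrev ConeDom (n : ℕ) :=
  (Fin n → ℝ) × (Fin n → ℝ) × (Fin (n - 2) → ℝ) × (Fin (n - 2) → ℝ) ×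
    (Fin (n - 2) → ℝ) × (Fin (n - 3) → ℝ)

/-- The extended diagonal-length vector, with the conventions `c_0 := σ_1` and
`c_{n−2} := σ_n` (in 0-based indexing: `C 0 = σ 0`, `C (n-2) = σ (n-1)`, and
`C j = c (j-1)` for `0 < j < n-2`). -/
noncomputable def cExt (n : ℕ) (hn : 3 ≤ n) (σ : Fin n → ℝ) (c : Fin (n - 3) → ℝ)
    (j : ℕ) : ℝ :=
  if j = 0 then σ ⟨0, by omega⟩
  else if j = n - 2 then σ ⟨n - 1, by omega⟩
  else if hj : j - 1 < n - 3 then c ⟨j - 1, hj⟩ else 0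

/-- The map `g̃_n : ℝ^(6n−9) → ℝ^(3(n−2)+n)`: for each `i = 1, …, n−2` (0-based
`i = 0, …, n−3`) the triple `g_3(σ_{i+1}, c_{i−1}, c_i, α_i, β_i, γ_i)`, together with the
`n` scalars `δ_1 − (α_1 + ⋯ + α_{n−2})`, `δ_2 − γ_1`, `δ_j − β_{j−2} − γ_{j−1}` for
`j = 3, …, n−1`, and `δ_n − β_{n−2}` (all written here in 0-based indexing). -/
noncomputable def gTilde (n : ℕ) (hn : 3 ≤ n) (x : ConeDom n) :
    (Fin (n - 2) → Fin 3 → ℝ) × (Fin n → ℝ) :=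
  let σ := x.1
  let δ := x.2.1
  let α := x.2.2.1
  let β := x.2.2.2.1
  let γ := x.2.2.2.2.1
  let c := x.2.2.2.2.2
  (fun i => gThree (σ ⟨i.1 + 1, by have := i.2; omega⟩)
      (cExt n hn σ c i.1) (cExt n hn σ c (i.1 + 1)) (α i) (β i) (γ i),
   fun j =>
     if j.1 = 0 then δ j - ∑ i, α i
     else if j.1 = 1 then δ j - γ ⟨0, by omega⟩
     else if hl : j.1 = n - 1 then δ j - β ⟨n - 3, by omega⟩
     else δ j - β ⟨j.1 - 2, by have := j.2; omega⟩ - γ ⟨j.1 - 1, by have := j.2; omega⟩)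

/-- The open set `Ω_n`: `σ ∈ (0,π)ⁿ`, `δ ∈ (0,2π)ⁿ`, each triple `(α_i, β_i, γ_i)` in
`(0,π)³ ∪ (π,2π)³`, and `c ∈ (0,π)^(n−3)`. -/
def OmegaCone (n : ℕ) (x : ConeDom n) : Prop :=
  (∀ i, x.1 i ∈ Set.Ioo 0 π) ∧
  (∀ i, x.2.1 i ∈ Set.Ioo 0 (2 * π)) ∧
  (∀ i, (x.2.2.1 i ∈ Set.Ioo 0 π ∧ x.2.2.2.1 i ∈ Set.Ioo 0 π ∧
           x.2.2.2.2.1 i ∈ Set.Ioo 0 π) ∨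
        (x.2.2.1 i ∈ Set.Ioo π (2 * π) ∧ x.2.2.2.1 i ∈ Set.Ioo π (2 * π) ∧
           x.2.2.2.2.1 i ∈ Set.Ioo π (2 * π))) ∧
  (∀ i, x.2.2.2.2.2 i ∈ Set.Ioo 0 π)

lemma cExt_mem_Ioo {n : ℕ} (hn : 3 ≤ n) {σ : Fin n → ℝ} {c : Fin (n-3) → ℝ}
    (hσ : ∀ i, σ i ∈ Set.Ioo 0 π) (hc : ∀ i, c i ∈ Set.Ioo 0 π)
    {j : ℕ} (hj : j ≤ n - 2) : cExt n hn σ c j ∈ Set.Ioo 0 π := by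
  unfold cExt
  split_ifs with h1 h2 h3
  · exact hσ _
  · exact hσ _
  · exact hc _
  · omega

lemma sin_ne_zero_of_mem {t : ℝ} (h : t ∈ Set.Ioo 0 π ∨ t ∈ Set.Ioo π (2*π)) :
    Real.sin t ≠ 0 := by
  rcases h with h | h
  · exact ne_of_gt (Real.sin_pos_of_pos_of_lt_pi h.1 h.2)
  · have h1 : 0 < Real.sin (t - π) :=
      Real.sin_pos_of_pos_of_lt_pi (by linarith [h.1]) (by linarith [h.2])
    rw [Real.sin_sub_pi] at h1; linarith

set_option maxHeartbeats 1000000 in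
lemma gTilde_differentiableAt {n : ℕ} (hn : 3 ≤ n) (x : ConeDom n) :
    DifferentiableAt ℝ (gTilde n hn) x := by
  apply DifferentiableAt.prodMk
  · rw [differentiableAt_pi]; intro i
    rw [differentiableAt_pi]; intro k
    have hc1 : DifferentiableAt ℝ (fun y : ConeDom n => cExt n hn y.1 y.2.2.2.2.2 i.1) x := by
      unfold cExt; split_ifs <;> fun_prop
    have hc2 : DifferentiableAt ℝ (fun y : ConeDom n => cExt n hn y.1 y.2.2.2.2.2 (i.1 + 1)) x := by
      unfold cExt; split_ifs <;> fun_prop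
    have d0 : DifferentiableAt ℝ (fun y : ConeDom n =>
        cos (cExt n hn y.1 y.2.2.2.2.2 i.1) * cos (cExt n hn y.1 y.2.2.2.2.2 (i.1 + 1)) +
          sin (cExt n hn y.1 y.2.2.2.2.2 i.1) * sin (cExt n hn y.1 y.2.2.2.2.2 (i.1 + 1)) *
            cos (y.2.2.1 i) - cos (y.1 ⟨i.1 + 1, by have := i.2; omega⟩)) x := by fun_prop
    have d1 : DifferentiableAt ℝ (fun y : ConeDom n =>
        cos (cExt n hn y.1 y.2.2.2.2.2 (i.1 + 1)) * cos (y.1 ⟨i.1 + 1, by have := i.2; omega⟩) +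
          sin (cExt n hn y.1 y.2.2.2.2.2 (i.1 + 1)) * sin (y.1 ⟨i.1 + 1, by have := i.2; omega⟩) *
            cos (y.2.2.2.1 i) - cos (cExt n hn y.1 y.2.2.2.2.2 i.1)) x := by fun_prop
    have d2 : DifferentiableAt ℝ (fun y : ConeDom n =>
        cos (y.1 ⟨i.1 + 1, by have := i.2; omega⟩) * cos (cExt n hn y.1 y.2.2.2.2.2 i.1) +
          sin (y.1 ⟨i.1 + 1, by have := i.2; omega⟩) * sin (cExt n hn y.1 y.2.2.2.2.2 i.1) *
            cos (y.2.2.2.2.1 i) - cos (cExt n hn y.1 y.2.2.2.2.2 (i.1 + 1))) x := by fun_prop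
    simp only [gTilde, gThree]
    fin_cases k
    · exact d0
    · exact d1
    · exact d2
  · rw [differentiableAt_pi]; intro j
    have := j.2
    show DifferentiableAt ℝ (fun y : ConeDom n =>
      if j.1 = 0 then y.2.1 j - ∑ i, y.2.2.1 i
      else if j.1 = 1 then y.2.1 j - y.2.2.2.2.1 ⟨0, by omega⟩
      else if hl : j.1 = n - 1 then y.2.1 j - y.2.2.2.1 ⟨n - 3, by omega⟩
      else y.2.1 j - y.2.2.2.1 ⟨j.1 - 2, by omega⟩ - y.2.2.2.2.1 ⟨j.1 - 1, by omega⟩) x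
    split_ifs <;> fun_prop

set_option maxHeartbeats 1000000 in
/-- for `n ≥ 3`, at every point of `Ω_n` the Fréchet derivative of `g̃_n`
is surjective (full rank `3(n−2) + n`); in particular `0` is a regular value of the
restriction of `g̃_n` to `Ω_n`. -/
theorem stmt_8 (n : ℕ) (hn : 3 ≤ n) (x : ConeDom n) (hx : OmegaCone n x) :
    Function.Surjective ⇑(fderiv ℝ (gTilde n hn) x) := by
  obtain ⟨hσ, hδ, hαβγ, hc⟩ := hx
  intro y
  obtain ⟨u, w⟩ := y
  -- nonvanishing sines
  have hsA : ∀ i : Fin (n-2), Real.sin (x.1 ⟨i.1 + 1, by have := i.2; omega⟩) ≠ 0 :=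
    fun i => ne_of_gt (Real.sin_pos_of_pos_of_lt_pi (hσ _).1 (hσ _).2)
  have hsB : ∀ i : Fin (n-2), Real.sin (cExt n hn x.1 x.2.2.2.2.2 i.1) ≠ 0 := by
    intro i
    have h := cExt_mem_Ioo hn hσ hc (j := i.1) (by have := i.2; omega)
    exact ne_of_gt (Real.sin_pos_of_pos_of_lt_pi h.1 h.2)
  have hsC : ∀ i : Fin (n-2), Real.sin (cExt n hn x.1 x.2.2.2.2.2 (i.1 + 1)) ≠ 0 := by
    intro i
    have h := cExt_mem_Ioo hn hσ hc (j := i.1 + 1) (by have := i.2; omega)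
    exact ne_of_gt (Real.sin_pos_of_pos_of_lt_pi h.1 h.2)
  have hsα : ∀ i, Real.sin (x.2.2.1 i) ≠ 0 := fun i =>
    sin_ne_zero_of_mem (by rcases hαβγ i with h | h; exacts [Or.inl h.1, Or.inr h.1])
  have hsβ : ∀ i, Real.sin (x.2.2.2.1 i) ≠ 0 := fun i =>
    sin_ne_zero_of_mem (by rcases hαβγ i with h | h; exacts [Or.inl h.2.1, Or.inr h.2.1])
  have hsγ : ∀ i, Real.sin (x.2.2.2.2.1 i) ≠ 0 := fun i =>
    sin_ne_zero_of_mem (by rcases hαβγ i with h | h; exacts [Or.inl h.2.2, Or.inr h.2.2])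
  -- the tangent vector
  set vα : Fin (n-2) → ℝ := fun i => -(u i 0) /
    (Real.sin (cExt n hn x.1 x.2.2.2.2.2 i.1) * Real.sin (cExt n hn x.1 x.2.2.2.2.2 (i.1+1)) *
      Real.sin (x.2.2.1 i)) with hvα
  set vβ : Fin (n-2) → ℝ := fun i => -(u i 1) /
    (Real.sin (cExt n hn x.1 x.2.2.2.2.2 (i.1+1)) * Real.sin (x.1 ⟨i.1 + 1, by have := i.2; omega⟩) *
      Real.sin (x.2.2.2.1 i)) with hvβ
  set vγ : Fin (n-2) → ℝ := fun i => -(u i 2) /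
    (Real.sin (x.1 ⟨i.1 + 1, by have := i.2; omega⟩) * Real.sin (cExt n hn x.1 x.2.2.2.2.2 i.1) *
      Real.sin (x.2.2.2.2.1 i)) with hvγ
  set vδ : Fin n → ℝ := fun j =>
    if j.1 = 0 then w j + ∑ i, vα i
    else if j.1 = 1 then w j + vγ ⟨0, by omega⟩
    else if hl : j.1 = n - 1 then w j + vβ ⟨n - 3, by omega⟩
    else w j + vβ ⟨j.1 - 2, by have := j.2; omega⟩ + vγ ⟨j.1 - 1, by have := j.2; omega⟩
    with hvδ
  set v : ConeDom n := ((0 : Fin n → ℝ), vδ, vα, vβ, vγ, (0 : Fin (n-3) → ℝ)) with hv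
  refine ⟨v, ?_⟩
  have hfun : (fun t : ℝ => gTilde n hn (x + t • v)) = fun t =>
      ((fun i : Fin (n-2) => gThree (x.1 ⟨i.1 + 1, by have := i.2; omega⟩)
          (cExt n hn x.1 x.2.2.2.2.2 i.1) (cExt n hn x.1 x.2.2.2.2.2 (i.1 + 1))
          (x.2.2.1 i + t * vα i) (x.2.2.2.1 i + t * vβ i) (x.2.2.2.2.1 i + t * vγ i)),
       (fun j : Fin n =>
         if j.1 = 0 then (x.2.1 j + t * vδ j) - ∑ i, (x.2.2.1 i + t * vα i)
         else if j.1 = 1 then (x.2.1 j + t * vδ j) -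
           (x.2.2.2.2.1 ⟨0, by omega⟩ + t * vγ ⟨0, by omega⟩)
         else if hl : j.1 = n - 1 then (x.2.1 j + t * vδ j) -
           (x.2.2.2.1 ⟨n - 3, by omega⟩ + t * vβ ⟨n - 3, by omega⟩)
         else (x.2.1 j + t * vδ j) -
           (x.2.2.2.1 ⟨j.1 - 2, by have := j.2; omega⟩ + t * vβ ⟨j.1 - 2, by have := j.2; omega⟩) -
           (x.2.2.2.2.1 ⟨j.1 - 1, by have := j.2; omega⟩ + t * vγ ⟨j.1 - 1, by have := j.2; omega⟩))) := by
    funext t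
    simp only [gTilde, hv, Prod.fst_add, Prod.snd_add, Prod.smul_fst, Prod.smul_snd,
      smul_zero, add_zero, Pi.add_apply, Pi.smul_apply, smul_eq_mul, Pi.zero_apply]
  have key : HasDerivAt (fun t : ℝ => gTilde n hn (x + t • v)) (u, w) 0 := by
    rw [hfun]
    refine HasDerivAt.prodMk ?_ ?_
    · rw [hasDerivAt_pi]; intro i
      rw [hasDerivAt_pi]; intro k
      have hB := hsB i
      have hC := hsC i
      have hA := hsA i
      have d0 : HasDerivAt (fun t : ℝ =>
          cos (cExt n hn x.1 x.2.2.2.2.2 i.1) * cos (cExt n hn x.1 x.2.2.2.2.2 (i.1 + 1)) +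
            sin (cExt n hn x.1 x.2.2.2.2.2 i.1) * sin (cExt n hn x.1 x.2.2.2.2.2 (i.1 + 1)) *
              cos (x.2.2.1 i + t * vα i) - cos (x.1 ⟨i.1 + 1, by have := i.2; omega⟩)) (u i 0) 0 := by
        have h := ((((hasDerivAt_mul_const (x := (0:ℝ)) (vα i)).const_add (x.2.2.1 i)).cos.const_mul
          (sin (cExt n hn x.1 x.2.2.2.2.2 i.1) * sin (cExt n hn x.1 x.2.2.2.2.2 (i.1 + 1)))).const_add
          (cos (cExt n hn x.1 x.2.2.2.2.2 i.1) * cos (cExt n hn x.1 x.2.2.2.2.2 (i.1 + 1)))).sub_const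
          (cos (x.1 ⟨i.1 + 1, by have := i.2; omega⟩))
        convert h using 1
        · rfl
        · rfl
        simp only [hvα, zero_mul, add_zero]
        field_simp [hB, hC, hsα i]
      have d1 : HasDerivAt (fun t : ℝ =>
          cos (cExt n hn x.1 x.2.2.2.2.2 (i.1 + 1)) * cos (x.1 ⟨i.1 + 1, by have := i.2; omega⟩) +
            sin (cExt n hn x.1 x.2.2.2.2.2 (i.1 + 1)) * sin (x.1 ⟨i.1 + 1, by have := i.2; omega⟩) *
              cos (x.2.2.2.1 i + t * vβ i) - cos (cExt n hn x.1 x.2.2.2.2.2 i.1)) (u i 1) 0 := by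
        have h := ((((hasDerivAt_mul_const (x := (0:ℝ)) (vβ i)).const_add (x.2.2.2.1 i)).cos.const_mul
          (sin (cExt n hn x.1 x.2.2.2.2.2 (i.1 + 1)) * sin (x.1 ⟨i.1 + 1, by have := i.2; omega⟩))).const_add
          (cos (cExt n hn x.1 x.2.2.2.2.2 (i.1 + 1)) * cos (x.1 ⟨i.1 + 1, by have := i.2; omega⟩))).sub_const
          (cos (cExt n hn x.1 x.2.2.2.2.2 i.1))
        convert h using 1
        · rfl
        · rfl
        simp only [hvβ, zero_mul, add_zero]
        field_simp [hC, hA, hsβ i]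
      have d2 : HasDerivAt (fun t : ℝ =>
          cos (x.1 ⟨i.1 + 1, by have := i.2; omega⟩) * cos (cExt n hn x.1 x.2.2.2.2.2 i.1) +
            sin (x.1 ⟨i.1 + 1, by have := i.2; omega⟩) * sin (cExt n hn x.1 x.2.2.2.2.2 i.1) *
              cos (x.2.2.2.2.1 i + t * vγ i) - cos (cExt n hn x.1 x.2.2.2.2.2 (i.1 + 1))) (u i 2) 0 := by
        have h := ((((hasDerivAt_mul_const (x := (0:ℝ)) (vγ i)).const_add (x.2.2.2.2.1 i)).cos.const_mul
          (sin (x.1 ⟨i.1 + 1, by have := i.2; omega⟩) * sin (cExt n hn x.1 x.2.2.2.2.2 i.1))).const_add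
          (cos (x.1 ⟨i.1 + 1, by have := i.2; omega⟩) * cos (cExt n hn x.1 x.2.2.2.2.2 i.1))).sub_const
          (cos (cExt n hn x.1 x.2.2.2.2.2 (i.1 + 1)))
        convert h using 1
        · rfl
        · rfl
        simp only [hvγ, zero_mul, add_zero]
        field_simp [hA, hB, hsγ i]
      fin_cases k
      · exact d0
      · exact d1
      · exact d2
    · rw [hasDerivAt_pi]; intro j
      split_ifs with h0 h1 h2
      · have hsum : ∀ t : ℝ, ∑ i, (x.2.2.1 i + t * vα i) =
            (∑ i, x.2.2.1 i) + t * ∑ i, vα i := by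
          intro t; rw [Finset.mul_sum, Finset.sum_add_distrib]
        simp only [hsum]
        have hδj : vδ j = w j + ∑ i, vα i := by simp only [hvδ]; rw [if_pos h0]
        have h := ((hasDerivAt_mul_const (x := (0:ℝ)) (vδ j)).const_add (x.2.1 j)).sub
          ((hasDerivAt_mul_const (x := (0:ℝ)) (∑ i, vα i)).const_add (∑ i, x.2.2.1 i))
        convert h using 1
        · rfl
        rw [hδj]; ring
      · have hδj : vδ j = w j + vγ ⟨0, by omega⟩ := by
          simp only [hvδ]; rw [if_neg h0, if_pos h1]
        have h := ((hasDerivAt_mul_const (x := (0:ℝ)) (vδ j)).const_add (x.2.1 j)).sub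
          ((hasDerivAt_mul_const (x := (0:ℝ)) (vγ ⟨0, by omega⟩)).const_add (x.2.2.2.2.1 ⟨0, by omega⟩))
        convert h using 1
        · rfl
        rw [hδj]; ring
      · have hδj : vδ j = w j + vβ ⟨n - 3, by omega⟩ := by
          simp only [hvδ]; rw [if_neg h0, if_neg h1, dif_pos h2]
        have h := ((hasDerivAt_mul_const (x := (0:ℝ)) (vδ j)).const_add (x.2.1 j)).sub
          ((hasDerivAt_mul_const (x := (0:ℝ)) (vβ ⟨n - 3, by omega⟩)).const_add (x.2.2.2.1 ⟨n - 3, by omega⟩))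
        convert h using 1
        · rfl
        rw [hδj]; ring
      · have hδj : vδ j = w j + vβ ⟨j.1 - 2, by have := j.2; omega⟩ +
            vγ ⟨j.1 - 1, by have := j.2; omega⟩ := by
          simp only [hvδ]; rw [if_neg h0, if_neg h1, dif_neg h2]
        have h := (((hasDerivAt_mul_const (x := (0:ℝ)) (vδ j)).const_add (x.2.1 j)).sub
          ((hasDerivAt_mul_const (x := (0:ℝ)) (vβ ⟨j.1 - 2, by have := j.2; omega⟩)).const_add
            (x.2.2.2.1 ⟨j.1 - 2, by have := j.2; omega⟩))).sub
          ((hasDerivAt_mul_const (x := (0:ℝ)) (vγ ⟨j.1 - 1, by have := j.2; omega⟩)).const_add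
            (x.2.2.2.2.1 ⟨j.1 - 1, by have := j.2; omega⟩))
        convert h using 1
        · rfl
        rw [hδj]; ring
  -- identify the directional derivative with the Fréchet derivative applied to v
  have hpath : HasDerivAt (fun t : ℝ => x + t • v) v 0 := by
    simpa using ((hasDerivAt_id (0 : ℝ)).smul_const v).const_add x
  have hF : HasFDerivAt (gTilde n hn) (fderiv ℝ (gTilde n hn) x) (x + (0 : ℝ) • v) := by
    rw [show x + (0 : ℝ) • v = x by simp]
    exact (gTilde_differentiableAt hn x).hasFDerivAt
  have hline : HasDerivAt (fun t : ℝ => gTilde n hn (x + t • v))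
      (fderiv ℝ (gTilde n hn) x v) 0 := by
    exact hF.comp_hasDerivAt 0 hpath
  exact hline.unique key
end

section
/- Let n ≥ 3 and suppose (σ, δ, α, β, γ, c) and (σ, δ, α', β', γ', c') are two points of Ω_n with the same σ and δ components, both satisfying g̃_n = 0. Then α = α', β = β', γ = γ' and c = c'. In other words, the projection of the solution set T̃_n = {x ∈ Ω_n : g̃_n(x) = 0} onto the (σ,δ)-coordinates is injective: the auxiliary triangle angles α_i, β_i, γ_i and diagonal lengths c_i of a solution are uniquely determined by the face angles σ and the dihedral angles δ. -/
open Real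

open Real

set_option maxHeartbeats 1000000 in
private lemma cos_injOn_Ioo1 : Set.InjOn Real.cos (Set.Ioo 0 π) :=
  Real.injOn_cos.mono Set.Ioo_subset_Icc_self

private lemma cos_injOn_Ioo2 : Set.InjOn Real.cos (Set.Ioo π (2 * π)) := by
  intro x hx y hy h
  have hx' : 2 * π - x ∈ Set.Icc 0 π := ⟨by linarith [hx.2], by linarith [hx.1]⟩
  have hy' : 2 * π - y ∈ Set.Icc 0 π := ⟨by linarith [hy.2], by linarith [hy.1]⟩
  have hcx : Real.cos (2 * π - x) = Real.cos x := by
    rw [Real.cos_sub]; simp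
  have hcy : Real.cos (2 * π - y) = Real.cos y := by
    rw [Real.cos_sub]; simp
  have := Real.injOn_cos hx' hy' (by rw [hcx, hcy, h])
  linarith

set_option maxHeartbeats 1000000 in
/-- for `n ≥ 3`, if two points of `Ω_n` with the same `σ` and `δ` components
both satisfy `g̃_n = 0`, then their auxiliary components agree: the triangle angles
`α_i, β_i, γ_i` and diagonal lengths `c_i` of a solution are uniquely determined by the
face angles `σ` and the dihedral angles `δ`. -/
theorem stmt_9 (n : ℕ) (hn : 3 ≤ n) (σ δ : Fin n → ℝ)
    (α β γ α' β' γ' : Fin (n - 2) → ℝ) (c c' : Fin (n - 3) → ℝ)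
    (hx : OmegaCone n (σ, δ, α, β, γ, c)) (hx' : OmegaCone n (σ, δ, α', β', γ', c'))
    (hg : gTilde n hn (σ, δ, α, β, γ, c) = 0)
    (hg' : gTilde n hn (σ, δ, α', β', γ', c') = 0) :
    α = α' ∧ β = β' ∧ γ = γ' ∧ c = c' := by
  simp only [OmegaCone] at hx hx'
  obtain ⟨hσ, hδ, hT, hc⟩ := hx
  obtain ⟨-, -, hT', hc'⟩ := hx'
  have hg1 : ∀ i k, (gTilde n hn (σ,δ,α,β,γ,c)).1 i k = 0 := fun i k => by rw [hg]; rfl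
  have hgs : ∀ j, (gTilde n hn (σ,δ,α,β,γ,c)).2 j = 0 := fun j => by rw [hg]; rfl
  have hg1' : ∀ i k, (gTilde n hn (σ,δ,α',β',γ',c')).1 i k = 0 := fun i k => by rw [hg']; rfl
  have hgs' : ∀ j, (gTilde n hn (σ,δ,α',β',γ',c')).2 j = 0 := fun j => by rw [hg']; rfl
  -- membership of extended diagonals
  have memC : ∀ j, j ≤ n - 2 → cExt n hn σ c j ∈ Set.Ioo 0 π := by
    intro j hj
    unfold cExt
    split_ifs with h0 h1 h2
    · exact hσ _
    · exact hσ _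
    · exact hc _
    · omega
  have memC' : ∀ j, j ≤ n - 2 → cExt n hn σ c' j ∈ Set.Ioo 0 π := by
    intro j hj
    unfold cExt
    split_ifs with h0 h1 h2
    · exact hσ _
    · exact hσ _
    · exact hc' _
    · omega
  -- the three law-of-cosines equations, unprimed and primed
  have E1 : ∀ i : Fin (n-2), Real.cos (cExt n hn σ c i.1) * Real.cos (cExt n hn σ c (i.1+1))
      + Real.sin (cExt n hn σ c i.1) * Real.sin (cExt n hn σ c (i.1+1)) * Real.cos (α i)
      = Real.cos (σ ⟨i.1+1, by have := i.2; omega⟩) := by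
    intro i
    have h := hg1 i 0
    simp only [gTilde, gThree, Matrix.cons_val_zero, Pi.zero_apply] at h
    linarith
  have E1' : ∀ i : Fin (n-2), Real.cos (cExt n hn σ c' i.1) * Real.cos (cExt n hn σ c' (i.1+1))
      + Real.sin (cExt n hn σ c' i.1) * Real.sin (cExt n hn σ c' (i.1+1)) * Real.cos (α' i)
      = Real.cos (σ ⟨i.1+1, by have := i.2; omega⟩) := by
    intro i
    have h := hg1' i 0
    simp only [gTilde, gThree, Matrix.cons_val_zero, Pi.zero_apply] at h
    linarith
  have E2 : ∀ i : Fin (n-2), Real.cos (cExt n hn σ c (i.1+1)) * Real.cos (σ ⟨i.1+1, by have := i.2; omega⟩)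
      + Real.sin (cExt n hn σ c (i.1+1)) * Real.sin (σ ⟨i.1+1, by have := i.2; omega⟩) * Real.cos (β i)
      = Real.cos (cExt n hn σ c i.1) := by
    intro i
    have h := hg1 i 1
    simp only [gTilde, gThree, Matrix.cons_val_one, Matrix.head_cons, Matrix.cons_val_zero, Pi.zero_apply] at h
    linarith
  have E2' : ∀ i : Fin (n-2), Real.cos (cExt n hn σ c' (i.1+1)) * Real.cos (σ ⟨i.1+1, by have := i.2; omega⟩)
      + Real.sin (cExt n hn σ c' (i.1+1)) * Real.sin (σ ⟨i.1+1, by have := i.2; omega⟩) * Real.cos (β' i)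
      = Real.cos (cExt n hn σ c' i.1) := by
    intro i
    have h := hg1' i 1
    simp only [gTilde, gThree, Matrix.cons_val_one, Matrix.head_cons, Matrix.cons_val_zero, Pi.zero_apply] at h
    linarith
  have E3 : ∀ i : Fin (n-2), Real.cos (σ ⟨i.1+1, by have := i.2; omega⟩) * Real.cos (cExt n hn σ c i.1)
      + Real.sin (σ ⟨i.1+1, by have := i.2; omega⟩) * Real.sin (cExt n hn σ c i.1) * Real.cos (γ i)
      = Real.cos (cExt n hn σ c (i.1+1)) := by
    intro i
    have h := hg1 i 2
    simp only [gTilde, gThree, Matrix.cons_val_two, Matrix.tail_cons, Matrix.head_cons,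
      Pi.zero_apply] at h
    linarith
  have E3' : ∀ i : Fin (n-2), Real.cos (σ ⟨i.1+1, by have := i.2; omega⟩) * Real.cos (cExt n hn σ c' i.1)
      + Real.sin (σ ⟨i.1+1, by have := i.2; omega⟩) * Real.sin (cExt n hn σ c' i.1) * Real.cos (γ' i)
      = Real.cos (cExt n hn σ c' (i.1+1)) := by
    intro i
    have h := hg1' i 2
    simp only [gTilde, gThree, Matrix.cons_val_two, Matrix.tail_cons, Matrix.head_cons,
      Pi.zero_apply] at h
    linarith
  -- scalar equations
  have S1 : γ ⟨0, by omega⟩ = δ ⟨1, by omega⟩ := by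
    have h := hgs ⟨1, by omega⟩
    simp only [gTilde, Pi.zero_apply] at h
    norm_num at h
    linarith
  have S1' : γ' ⟨0, by omega⟩ = δ ⟨1, by omega⟩ := by
    have h := hgs' ⟨1, by omega⟩
    simp only [gTilde, Pi.zero_apply] at h
    norm_num at h
    linarith
  have S3 : ∀ j (h2 : 2 ≤ j) (hj : j ≤ n - 2),
      δ ⟨j, by omega⟩ - β ⟨j-2, by omega⟩ - γ ⟨j-1, by omega⟩ = 0 := by
    intro j h2 hj
    have h := hgs ⟨j, by omega⟩
    simp only [gTilde, Pi.zero_apply] at h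
    rw [if_neg (by omega : ¬(j = 0)), if_neg (by omega : ¬(j = 1)),
      dif_neg (by omega : ¬(j = n - 1))] at h
    exact h
  have S3' : ∀ j (h2 : 2 ≤ j) (hj : j ≤ n - 2),
      δ ⟨j, by omega⟩ - β' ⟨j-2, by omega⟩ - γ' ⟨j-1, by omega⟩ = 0 := by
    intro j h2 hj
    have h := hgs' ⟨j, by omega⟩
    simp only [gTilde, Pi.zero_apply] at h
    rw [if_neg (by omega : ¬(j = 0)), if_neg (by omega : ¬(j = 1)),
      dif_neg (by omega : ¬(j = n - 1))] at h
    exact h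
  -- same-branch angle determination
  have branchEq : ∀ i : Fin (n-2), γ i = γ' i →
      (Real.cos (β i) = Real.cos (β' i) → β i = β' i) ∧
      (Real.cos (α i) = Real.cos (α' i) → α i = α' i) := by
    intro i hγ
    rcases hT i with ⟨ha, hb, hgc⟩ | ⟨ha, hb, hgc⟩ <;>
      rcases hT' i with ⟨ha', hb', hgc'⟩ | ⟨ha', hb', hgc'⟩
    · exact ⟨fun h => cos_injOn_Ioo1 hb hb' h, fun h => cos_injOn_Ioo1 ha ha' h⟩
    · rw [hγ] at hgc; exact absurd hgc'.1 (not_lt.2 hgc.2.le)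
    · rw [hγ] at hgc; exact absurd hgc.1 (not_lt.2 hgc'.2.le)
    · exact ⟨fun h => cos_injOn_Ioo2 hb hb' h, fun h => cos_injOn_Ioo2 ha ha' h⟩
  -- main induction
  have main : ∀ i (hi : i ≤ n - 3), γ ⟨i, by omega⟩ = γ' ⟨i, by omega⟩ ∧
      cExt n hn σ c i = cExt n hn σ c' i := by
    intro i
    induction i with
    | zero =>
      intro _
      refine ⟨S1.trans S1'.symm, ?_⟩
      unfold cExt
      rw [if_pos rfl, if_pos rfl]
    | succ i ih =>
      intro hi
      obtain ⟨hγi, hCi⟩ := ih (by omega)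
      have hCi1 : cExt n hn σ c (i+1) = cExt n hn σ c' (i+1) := by
        apply cos_injOn_Ioo1 (memC (i+1) (by omega)) (memC' (i+1) (by omega))
        have e3 := E3 ⟨i, by omega⟩
        have e3' := E3' ⟨i, by omega⟩
        rw [← e3, ← e3', hCi, hγi]
      have hβi : β ⟨i, by omega⟩ = β' ⟨i, by omega⟩ := by
        have e2 := E2 ⟨i, by omega⟩
        have e2' := E2' ⟨i, by omega⟩
        have hs1 : 0 < Real.sin (cExt n hn σ c' (i+1)) :=
          Real.sin_pos_of_pos_of_lt_pi (memC' (i+1) (by omega)).1 (memC' (i+1) (by omega)).2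
        have hs2 : 0 < Real.sin (σ ⟨i+1, by omega⟩) :=
          Real.sin_pos_of_pos_of_lt_pi (hσ _).1 (hσ _).2
        rw [hCi, hCi1] at e2
        have hmc : Real.sin (cExt n hn σ c' (i+1)) * Real.sin (σ ⟨i+1, by omega⟩) *
            Real.cos (β ⟨i, by omega⟩) =
            Real.sin (cExt n hn σ c' (i+1)) * Real.sin (σ ⟨i+1, by omega⟩) *
            Real.cos (β' ⟨i, by omega⟩) := by linarith
        have hcos := mul_left_cancel₀ (ne_of_gt (mul_pos hs1 hs2)) hmc
        exact (branchEq ⟨i, by omega⟩ hγi).1 hcos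
      have hγi1 : γ ⟨i+1, by omega⟩ = γ' ⟨i+1, by omega⟩ := by
        have s := S3 (i+2) (by omega) (by omega)
        have s' := S3' (i+2) (by omega) (by omega)
        have hβi' : β ⟨i+2-2, by omega⟩ = β' ⟨i+2-2, by omega⟩ := hβi
        have : γ ⟨i+2-1, by omega⟩ = γ' ⟨i+2-1, by omega⟩ := by
          rw [hβi'] at s; linarith
        exact this
      exact ⟨hγi1, hCi1⟩
  -- all extended diagonals agree
  have hCall : ∀ j, j ≤ n - 2 → cExt n hn σ c j = cExt n hn σ c' j := by
    intro j hj
    rcases Nat.lt_or_ge j (n - 2) with h | h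
    · exact (main j (by omega)).2
    · have hj2 : j = n - 2 := by omega
      unfold cExt
      rw [if_neg (by omega : ¬(j = 0)), if_neg (by omega : ¬(j = 0)), if_pos hj2, if_pos hj2]
  -- γ equality
  have hγall : γ = γ' := by
    funext i
    have := (main i.1 (by have := i.2; omega)).1
    simpa using this
  -- β equality
  have hβall : β = β' := by
    funext i
    have e2 := E2 i
    have e2' := E2' i
    have hCa := hCall i.1 (by have := i.2; omega)
    have hCb := hCall (i.1+1) (by have := i.2; omega)
    have hs1 : 0 < Real.sin (cExt n hn σ c' (i.1+1)) :=
      Real.sin_pos_of_pos_of_lt_pi (memC' (i.1+1) (by have := i.2; omega)).1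
        (memC' (i.1+1) (by have := i.2; omega)).2
    have hs2 : 0 < Real.sin (σ ⟨i.1+1, by have := i.2; omega⟩) :=
      Real.sin_pos_of_pos_of_lt_pi (hσ _).1 (hσ _).2
    rw [hCa, hCb] at e2
    have hmc : Real.sin (cExt n hn σ c' (i.1+1)) * Real.sin (σ ⟨i.1+1, by have := i.2; omega⟩) *
        Real.cos (β i) =
        Real.sin (cExt n hn σ c' (i.1+1)) * Real.sin (σ ⟨i.1+1, by have := i.2; omega⟩) *
        Real.cos (β' i) := by linarith
    have hcos := mul_left_cancel₀ (ne_of_gt (mul_pos hs1 hs2)) hmc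
    exact (branchEq i (by rw [hγall])).1 hcos
  -- α equality
  have hαall : α = α' := by
    funext i
    have e1 := E1 i
    have e1' := E1' i
    have hCa := hCall i.1 (by have := i.2; omega)
    have hCb := hCall (i.1+1) (by have := i.2; omega)
    have hs1 : 0 < Real.sin (cExt n hn σ c' i.1) :=
      Real.sin_pos_of_pos_of_lt_pi (memC' i.1 (by have := i.2; omega)).1
        (memC' i.1 (by have := i.2; omega)).2
    have hs2 : 0 < Real.sin (cExt n hn σ c' (i.1+1)) :=
      Real.sin_pos_of_pos_of_lt_pi (memC' (i.1+1) (by have := i.2; omega)).1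
        (memC' (i.1+1) (by have := i.2; omega)).2
    rw [hCa, hCb] at e1
    have hmc : Real.sin (cExt n hn σ c' i.1) * Real.sin (cExt n hn σ c' (i.1+1)) *
        Real.cos (α i) =
        Real.sin (cExt n hn σ c' i.1) * Real.sin (cExt n hn σ c' (i.1+1)) *
        Real.cos (α' i) := by linarith
    have hcos := mul_left_cancel₀ (ne_of_gt (mul_pos hs1 hs2)) hmc
    exact (branchEq i (by rw [hγall])).2 hcos
  -- c equality
  have hcall : c = c' := by
    funext i
    have h := hCall (i.1+1) (by have := i.2; omega)
    have h1 : ¬(i.1+1 = 0) := by omega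
    have h2 : ¬(i.1+1 = n-2) := by have := i.2; omega
    have h3 : i.1+1-1 < n-3 := by have := i.2; omega
    simp only [cExt, if_neg h1, if_neg h2, dif_pos h3] at h
    simpa using h
  exact ⟨hαall, hβall, hγall, hcall⟩
end
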